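/- First-order operadic Stokes law: for every bilinear map μ ∈ C² and all multilinear maps f ∈ C^m, g ∈ C^n, δ_μ(f ∘ g) − f ∘ (δ_μ g) − (−1)^{|g|} (δ_μ f) ∘ g = (−1)^{|g|} (f ⌣ g − (−1)^{mn} g ⌣ f), where |g| = n − 1. -/
import Mathlib


open Finset

section OperadPrelude

variable {K : Type*} [CommRing K] {L : Type*} [AddCommGroup L] [Module K L]

/-- `C K L n`: the `K`-module of `n`-multilinear maps `L^n → L`
(the degree-`n` component of the endomorphism operad of `L`). -/
abbrev C (K L : Type*) [CommRing K] [AddCommGroup L] [Module K L] (n : ℕ) :=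
  MultilinearMap K (fun _ : Fin n => L) L

/-- The extension of an `n`-ary multilinear operation to sequences `ℕ → L`:
it evaluates `f` on the first `n` entries of the sequence.  Two `n`-ary
multilinear operations are equal iff their extensions are equal, so operadic
identities are stated as identities between extensions. -/
def ex {n : ℕ} (f : C K L n) : (ℕ → L) → L := fun x => f fun j => x j.1

/-- The sign `(-1)^e` for an integer exponent `e`. -/
def sgn (e : ℤ) : ℤ := (((-1 : ℤˣ) ^ e : ℤˣ) : ℤ)

/-- Partial composition `f ∘ᵢ g`, where `n = deg g`:
`(f ∘ᵢ g)(x₀, x₁, …) = (-1)^{i(n-1)} f(x₀,…,x_{i-1}, g(x_i,…,x_{i+n-1}), x_{i+n},…)`. -/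
def pc (n i : ℕ) (f g : (ℕ → L) → L) : (ℕ → L) → L :=
  fun x => sgn ((i : ℤ) * ((n : ℤ) - 1)) •
    f fun j => if j < i then x j else if j = i then g (fun k => x (i + k)) else x (j + n - 1)

/-- Total composition `f ∘ g := Σ_{i=0}^{m-1} f ∘ᵢ g`, where `m = deg f`, `n = deg g`. -/
def tc (m n : ℕ) (f g : (ℕ → L) → L) : (ℕ → L) → L :=
  fun x => ∑ i ∈ Finset.range m, pc n i f g x

/-- The associator `(h, f, g) := (h ∘ f) ∘ g − h ∘ (f ∘ g)` of the total composition,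
where `m = deg h`, `n = deg f`, `p = deg g`. -/
def assoc (m n p : ℕ) (h f g : (ℕ → L) → L) : (ℕ → L) → L :=
  fun x => tc (m + n - 1) p (tc m n h f) g x - tc m (n + p - 1) h (tc n p f g) x

/-- The brace `⟨h|fg⟩ := Σ (h ∘ᵢ f) ∘ⱼ g`, summed over `0 ≤ i ≤ m-2`,
`i + n ≤ j ≤ m + n - 2`, where `m = deg h`, `n = deg f`, `p = deg g`. -/
def br2 (m n p : ℕ) (h f g : (ℕ → L) → L) : (ℕ → L) → L :=
  fun x => ∑ i ∈ Finset.range (m - 1), ∑ j ∈ Finset.Icc (i + n) (m + n - 2),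
    pc p j (pc n i h f) g x

/-- The triple brace `⟨h|fgb⟩ := Σ ((h ∘ᵢ f) ∘ⱼ g) ∘ₖ b`, summed over `0 ≤ i ≤ m-3`,
`i + n ≤ j ≤ m + n - 3`, `j + p ≤ k ≤ m + n + p - 3`, where
`m = deg h`, `n = deg f`, `p = deg g`, `q = deg b`. -/
def br3 (m n p q : ℕ) (h f g b : (ℕ → L) → L) : (ℕ → L) → L :=
  fun x => ∑ i ∈ Finset.range (m - 2), ∑ j ∈ Finset.Icc (i + n) (m + n - 3),
    ∑ k ∈ Finset.Icc (j + p) (m + n + p - 3),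
      pc q k (pc p j (pc n i h f) g) b x

/-- The Gerstenhaber bracket `[f,g] := f ∘ g − (-1)^{|f||g|} g ∘ f`,
where `m = deg f`, `n = deg g`, `|f| = m - 1`, `|g| = n - 1`. -/
def gb (m n : ℕ) (f g : (ℕ → L) → L) : (ℕ → L) → L :=
  fun x => tc m n f g x - sgn (((m : ℤ) - 1) * ((n : ℤ) - 1)) • tc n m g f x

/-- The cup product `f ⌣ g := (-1)^{deg f} (μ ∘₀ f) ∘_{deg f} g`,
where `m = deg f`, `n = deg g`. -/
def cup (μ : C K L 2) (m n : ℕ) (f g : (ℕ → L) → L) : (ℕ → L) → L :=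
  fun x => sgn (m : ℤ) • pc n m (pc m 0 (ex μ) f) g x

/-- The coboundary operator `δ_μ f := −[f, μ]`, where `m = deg f`. -/
def delta (μ : C K L 2) (m : ℕ) (f : (ℕ → L) → L) : (ℕ → L) → L :=
  fun x => - gb m 2 f (ex μ) x


-- sgn lemmas
lemma sgn_add (a b : ℤ) : sgn (a + b) = sgn a * sgn b := by
  unfold sgn
  rw [zpow_add]
  push_cast
  ring

lemma sgn_neg_one : sgn (-1) = -1 := by decide

lemma sgn_one : sgn 1 = -1 := by decide

lemma sgn_zero : sgn 0 = 1 := by decide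

lemma sgn_two_mul (a : ℤ) : sgn (2 * a) = 1 := by
  unfold sgn
  rw [zpow_mul, show ((-1 : ℤˣ) ^ (2:ℤ)) = 1 by decide, one_zpow]
  rfl

lemma ex_congr {n : ℕ} (f : C K L n) {a b : ℕ → L} (h : ∀ k, k < n → a k = b k) :
    ex f a = ex f b := by
  unfold ex
  exact congrArg f (funext fun j => h j.1 j.2)


lemma pc_ex_apply {m : ℕ} (f₀ : C K L m) {i : ℕ} (hi : i < m) (q : ℕ) (H : (ℕ → L) → L)
    (x : ℕ → L) :
    pc q i (ex f₀) H x = sgn ((i : ℤ) * ((q : ℤ) - 1)) •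
      (f₀.toLinearMap (fun j : Fin m => if j.1 < i then x j.1 else x (j.1 + q - 1)) ⟨i, hi⟩)
        (H fun k => x (i + k)) := by
  unfold pc ex
  congr 1
  rw [MultilinearMap.toLinearMap_apply]
  congr 1
  funext j
  rw [Function.update_apply]
  by_cases h : (j : ℕ) = i
  · simp [h, Fin.ext_iff, show ¬ i < i from lt_irrefl i]
  · simp [h, Fin.ext_iff]


lemma pc_left_sum {α : Type*} (q k : ℕ) (s : Finset α) (F : α → ((ℕ → L) → L))
    (W : (ℕ → L) → L) (x : ℕ → L) :
    pc q k (fun y => ∑ a ∈ s, F a y) W x = ∑ a ∈ s, pc q k (F a) W x := by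
  simp only [pc]
  rw [Finset.smul_sum]

lemma pc_left_shape (q k : ℕ) (c : ℤ) (F₁ F₂ : (ℕ → L) → L) (W : (ℕ → L) → L) (x : ℕ → L) :
    pc q k (fun y => -(F₁ y - c • F₂ y)) W x
      = -(pc q k F₁ W x - c • pc q k F₂ W x) := by
  simp only [pc]
  rw [smul_neg, smul_sub, smul_comm]

lemma pc_right_sum {α : Type*} {m : ℕ} (f₀ : C K L m) {i : ℕ} (hi : i < m) (q : ℕ)
    (s : Finset α) (G : α → ((ℕ → L) → L)) (x : ℕ → L) :
    pc q i (ex f₀) (fun y => ∑ a ∈ s, G a y) x = ∑ a ∈ s, pc q i (ex f₀) (G a) x := by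
  simp only [pc_ex_apply f₀ hi]
  rw [map_sum, Finset.smul_sum]

lemma pc_right_shape {m : ℕ} (f₀ : C K L m) {i : ℕ} (hi : i < m) (q : ℕ) (c : ℤ)
    (G₁ G₂ : (ℕ → L) → L) (x : ℕ → L) :
    pc q i (ex f₀) (fun y => -(G₁ y - c • G₂ y)) x
      = -(pc q i (ex f₀) G₁ x - c • pc q i (ex f₀) G₂ x) := by
  simp only [pc_ex_apply f₀ hi]
  rw [map_neg, map_sub, map_zsmul, smul_neg, smul_sub, smul_comm]


lemma pc_disjoint {b : ℕ} (g₀ : C K L b) (Fo H : (ℕ → L) → L) (p i s : ℕ) (x : ℕ → L) :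
    pc p (i + b + s) (pc b i Fo (ex g₀)) H x
      = sgn (((b : ℤ) - 1) * ((p : ℤ) - 1)) • pc b i (pc p (i + s + 1) Fo H) (ex g₀) x := by
  simp only [pc, smul_smul]
  congr 1
  · simp only [← sgn_add]
    congr 1
    push_cast
    ring
  · congr 1
    funext j
    by_cases h1 : j < i
    · have h2 : j < i + s + 1 := by omega
      have h3 : j < i + b + s := by omega
      simp [h1, h2, h3]
    by_cases h2 : j = i
    · subst h2
      have h3 : ¬ j < j := lt_irrefl j
      have h4 : j < j + s + 1 := by omega
      simp only [h1, h3, if_neg, if_pos, if_true, ite_true, ite_false, if_false,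
        eq_self_iff_true, h4]
      exact ex_congr g₀ (fun k hk => by
        have : j + k < j + b + s := by omega
        simp [this])
    by_cases h3 : j < i + s + 1
    · -- i < j < i+s+1
      have hji : i < j := by omega
      have hne : ¬ j = i + s + 1 := by omega
      have hy : j + b - 1 < i + b + s := by omega
      rw [if_neg h1, if_neg h2, if_pos h3, if_neg h1, if_neg h2, if_pos hy]
    by_cases h4 : j = i + s + 1
    · subst h4
      have hy1 : ¬ (i + s + 1 + b - 1 < i + b + s) := by omega
      have hy2 : i + s + 1 + b - 1 = i + b + s := by omega
      rw [if_neg h1, if_neg h2, if_neg h1, if_neg h2, if_neg h3, if_pos rfl,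
        if_neg (by omega : ¬ (i + s + 1 + b - 1 < i + b + s)), if_pos hy2]
      congr 1
      funext k
      have hk1 : ¬ (i + s + 1 + k < i) := by omega
      have hk2 : ¬ (i + s + 1 + k = i) := by omega
      rw [if_neg hk1, if_neg hk2]
      congr 1
      omega
    · -- j > i+s+1
      have hy1 : ¬ (j + b - 1 < i + b + s) := by omega
      have hy2 : ¬ (j + b - 1 = i + b + s) := by omega
      have hw1 : ¬ (j + p - 1 < i) := by omega
      have hw2 : ¬ (j + p - 1 = i) := by omega
      rw [if_neg h1, if_neg h2, if_neg hy1, if_neg hy2, if_neg h3, if_neg h4,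
        if_neg hw1, if_neg hw2]
      congr 1
      omega


lemma pc_left_zsmul (q k : ℕ) (c : ℤ) (F W : (ℕ → L) → L) (x : ℕ → L) :
    pc q k (fun y => c • F y) W x = c • pc q k F W x := by
  simp only [pc]
  rw [smul_comm]

lemma pc_right_zsmul {m : ℕ} (f₀ : C K L m) {i : ℕ} (hi : i < m) (q : ℕ) (c : ℤ)
    (G : (ℕ → L) → L) (x : ℕ → L) :
    pc q i (ex f₀) (fun y => c • G y) x = c • pc q i (ex f₀) G x := by
  simp only [pc_ex_apply f₀ hi]
  rw [map_zsmul, smul_comm]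

lemma pc_nested {m b : ℕ} (f₀ : C K L m) {i t : ℕ} (hi : i < m) (ht : t < b)
    (G H : (ℕ → L) → L) (p : ℕ) (x : ℕ → L) :
    pc p (i + t) (pc b i (ex f₀) G) H x = pc (b + p - 1) i (ex f₀) (pc p t G H) x := by
  have e₂ : pc p t G H = (fun y => sgn ((t : ℤ) * ((p : ℤ) - 1)) •
      (fun z => G (fun k' => if k' < t then z k' else if k' = t
        then H (fun k'' => z (t + k'')) else z (k' + p - 1))) y) := rfl
  have e₁ : pc b i (ex f₀) G = (fun y => sgn ((i : ℤ) * ((b : ℤ) - 1)) •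
      (fun z => ex f₀ (fun j => if j < i then z j else if j = i
        then G (fun k => z (i + k)) else z (j + b - 1))) y) := rfl
  rw [e₂, e₁, pc_right_zsmul f₀ hi, pc_left_zsmul]
  simp only [pc, ex, smul_smul]
  congr 1
  · simp only [← sgn_add]
    congr 1
    have hcast : ((b + p - 1 : ℕ) : ℤ) = (b : ℤ) + (p : ℤ) - 1 := by
      have : 1 ≤ b := by omega
      omega
    rw [hcast]
    push_cast
    ring
  · congr 1
    funext j
    rcases lt_trichotomy (j : ℕ) i with hj | hj | hj
    · have h1 : (j : ℕ) < i + t := by omega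
      simp [hj, h1]
    · rw [if_neg (by omega : ¬ (j:ℕ) < i), if_pos hj, if_neg (by omega : ¬ (j:ℕ) < i),
        if_pos hj]
      congr 1
      funext k
      rcases lt_trichotomy k t with hk | hk | hk
      · have : i + k < i + t := by omega
        simp [this, hk]
      · subst hk
        rw [if_neg (by omega : ¬ i + k < i + k), if_pos rfl, if_neg (by omega : ¬ k < k),
          if_pos rfl]
        congr 1
        funext k''
        congr 1
        omega
      · rw [if_neg (by omega : ¬ i + k < i + t), if_neg (by omega : ¬ i + k = i + t),
          if_neg (by omega : ¬ k < t), if_neg (by omega : ¬ k = t)]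
        congr 1
        omega
    · rw [if_neg (by omega : ¬ (j:ℕ) < i), if_neg (by omega : ¬ (j:ℕ) = i),
        if_neg (by omega : ¬ (j:ℕ) < i), if_neg (by omega : ¬ (j:ℕ) = i),
        if_neg (by omega : ¬ (j:ℕ) + b - 1 < i + t), if_neg (by omega : ¬ (j:ℕ) + b - 1 = i + t)]
      congr 1
      omega


lemma range_split3 {M : Type*} [AddCommMonoid M] (a b c N : ℕ) (h : a + b + c = N)
    (f : ℕ → M) :
    ∑ k ∈ Finset.range N, f k
      = (∑ k ∈ Finset.range a, f k) + (∑ t ∈ Finset.range b, f (a + t))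
        + ∑ s ∈ Finset.range c, f (a + b + s) := by
  subst h
  rw [Finset.sum_range_add, Finset.sum_range_add]

lemma pair_split {M : Type*} [AddCommMonoid M] (m : ℕ) (A : ℕ → ℕ → M) :
    ∑ i ∈ Finset.range (m + 1), ∑ k ∈ Finset.range m, A i k
      = (∑ i ∈ Finset.range m, ∑ k ∈ Finset.range i, A (i + 1) k)
        + (∑ i ∈ Finset.range m, ∑ s ∈ Finset.range (m - 1 - i), A i (i + s + 1))
        + (∑ i ∈ Finset.range m, A i i) + ∑ i ∈ Finset.range m, A (i + 1) i := by
  induction m with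
  | zero => simp
  | succ m ih =>
    have h1 : ∑ i ∈ Finset.range (m + 1 + 1), ∑ k ∈ Finset.range (m + 1), A i k
        = (∑ i ∈ Finset.range (m + 1), ∑ k ∈ Finset.range m, A i k)
          + (∑ k ∈ Finset.range m, A (m + 1) k) + (∑ i ∈ Finset.range m, A i m)
          + (A m m + A (m + 1) m) := by
      rw [Finset.sum_range_succ]
      conv_lhs =>
        rw [Finset.sum_congr rfl (fun i _ => Finset.sum_range_succ (fun k => A i k) m)]
      rw [Finset.sum_add_distrib, Finset.sum_range_succ (fun i => A i m),
        Finset.sum_range_succ (fun k => A (m + 1) k)]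
      abel
    have h2 : ∑ i ∈ Finset.range (m + 1), ∑ k ∈ Finset.range i, A (i + 1) k
        = (∑ i ∈ Finset.range m, ∑ k ∈ Finset.range i, A (i + 1) k)
          + ∑ k ∈ Finset.range m, A (m + 1) k := by
      rw [Finset.sum_range_succ]
    have h3 : ∑ i ∈ Finset.range (m + 1), ∑ s ∈ Finset.range (m + 1 - 1 - i), A i (i + s + 1)
        = (∑ i ∈ Finset.range m, ∑ s ∈ Finset.range (m - 1 - i), A i (i + s + 1))
          + ∑ i ∈ Finset.range m, A i m := by
      rw [Finset.sum_range_succ]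
      rw [show m + 1 - 1 - m = 0 by omega]
      rw [Finset.range_zero, Finset.sum_empty, add_zero]
      rw [← Finset.sum_add_distrib]
      refine Finset.sum_congr rfl (fun i hi => ?_)
      have him : i < m := Finset.mem_range.mp hi
      rw [show m + 1 - 1 - i = (m - 1 - i) + 1 by omega, Finset.sum_range_succ]
      congr 2
      omega
    rw [h1, ih, h2, h3, Finset.sum_range_succ (fun i => A i i),
      Finset.sum_range_succ (fun i => A (i + 1) i)]
    abel


lemma sgn_mul_self (e : ℤ) : sgn e * sgn e = 1 := by
  rw [← sgn_add, show e + e = 2 * e by ring, sgn_two_mul]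

lemma sgn_swap {e : ℤ} {v w : L} (h : v = sgn e • w) : w = sgn e • v := by
  rw [h, smul_smul, sgn_mul_self, one_smul]

/-- the first-order operadic Stokes law
`δ̄⟨f|g⟩ = (-1)^{|g|} (f ⌣ g − (-1)^{mn} g ⌣ f)`. -/
theorem first_order_operadic_stokes_law
    (μ : C K L 2) {m n : ℕ} (f : C K L m) (g : C K L n) :
    delta μ (m + n - 1) (tc m n (ex f) (ex g))
        - tc m (n + 1) (ex f) (delta μ n (ex g))
        - sgn ((n : ℤ) - 1) • tc (m + 1) n (delta μ m (ex f)) (ex g)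
      = sgn ((n : ℤ) - 1) •
          (cup μ m n (ex f) (ex g)
            - sgn ((m : ℤ) * (n : ℤ)) • cup μ n m (ex g) (ex f)) := by
  funext x
  simp only [Pi.sub_apply, Pi.smul_apply]
  -- shorthand signs
  -- Step 1: expansion of the first delta term
  have hTA : tc (m+n-1) 2 (tc m n (ex f) (ex g)) (ex μ) x
      = sgn ((n:ℤ)-1) • (∑ i ∈ range m, ∑ k ∈ range i,
            pc n (i+1) (pc 2 k (ex f) (ex μ)) (ex g) x)
        + (∑ i ∈ range m, ∑ t ∈ range n, pc (n+1) i (ex f) (pc 2 t (ex g) (ex μ)) x)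
        + sgn ((n:ℤ)-1) • ∑ i ∈ range m, ∑ s ∈ range (m-1-i),
            pc n i (pc 2 (i+s+1) (ex f) (ex μ)) (ex g) x := by
    calc tc (m+n-1) 2 (tc m n (ex f) (ex g)) (ex μ) x
        = ∑ k ∈ range (m+n-1), pc 2 k (tc m n (ex f) (ex g)) (ex μ) x := rfl
      _ = ∑ k ∈ range (m+n-1), ∑ i ∈ range m, pc 2 k (pc n i (ex f) (ex g)) (ex μ) x :=
          Finset.sum_congr rfl fun k _ =>
            pc_left_sum 2 k (range m) (fun i => pc n i (ex f) (ex g)) (ex μ) x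
      _ = ∑ i ∈ range m, ∑ k ∈ range (m+n-1), pc 2 k (pc n i (ex f) (ex g)) (ex μ) x :=
          Finset.sum_comm
      _ = ∑ i ∈ range m, ((sgn ((n:ℤ)-1) • ∑ k ∈ range i,
              pc n (i+1) (pc 2 k (ex f) (ex μ)) (ex g) x)
            + (∑ t ∈ range n, pc (n+1) i (ex f) (pc 2 t (ex g) (ex μ)) x)
            + sgn ((n:ℤ)-1) • ∑ s ∈ range (m-1-i),
                pc n i (pc 2 (i+s+1) (ex f) (ex μ)) (ex g) x) := by
          refine Finset.sum_congr rfl fun i hi => ?_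
          have hi' := Finset.mem_range.mp hi
          rw [range_split3 i n (m-1-i) (m+n-1) (by omega)]
          congr 1
          · congr 1
            · rw [Finset.smul_sum]
              refine Finset.sum_congr rfl fun k hk => ?_
              have hk' := Finset.mem_range.mp hk
              have h := pc_disjoint μ (ex f) (ex g) n k (i - k - 1) x
              rw [show k + 2 + (i - k - 1) = i + 1 by omega,
                  show k + (i - k - 1) + 1 = i by omega,
                  show sgn ((((2:ℕ):ℤ)-1) * ((n:ℤ)-1)) = sgn ((n:ℤ)-1) from
                    congrArg sgn (by push_cast; ring)] at h
              exact sgn_swap h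
            · refine Finset.sum_congr rfl fun t ht => ?_
              have ht' := Finset.mem_range.mp ht
              have h := pc_nested f hi' ht' (ex g) (ex μ) 2 x
              rw [show n + 2 - 1 = n + 1 by omega] at h
              exact h
          · rw [Finset.smul_sum]
            refine Finset.sum_congr rfl fun s hs => ?_
            have h := pc_disjoint g (ex f) (ex μ) 2 i s x
            rw [show sgn (((n:ℤ)-1) * (((2:ℕ):ℤ)-1)) = sgn ((n:ℤ)-1) from
                congrArg sgn (by push_cast; ring)] at h
            exact h
      _ = _ := by
          rw [Finset.sum_add_distrib, Finset.sum_add_distrib, ← Finset.smul_sum,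
            ← Finset.smul_sum]
  have hTB : tc 2 (m+n-1) (ex μ) (tc m n (ex f) (ex g)) x
      = (∑ i ∈ range m, pc n i (pc m 0 (ex μ) (ex f)) (ex g) x)
        + ∑ i ∈ range m, pc n (i+1) (pc m 1 (ex μ) (ex f)) (ex g) x := by
    calc tc 2 (m+n-1) (ex μ) (tc m n (ex f) (ex g)) x
        = pc (m+n-1) 0 (ex μ) (tc m n (ex f) (ex g)) x
          + pc (m+n-1) 1 (ex μ) (tc m n (ex f) (ex g)) x := by
          rw [show tc 2 (m+n-1) (ex μ) (tc m n (ex f) (ex g)) x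
              = ∑ j ∈ range 2, pc (m+n-1) j (ex μ) (tc m n (ex f) (ex g)) x from rfl,
            Finset.sum_range_succ, Finset.sum_range_succ, Finset.range_zero,
            Finset.sum_empty, zero_add]
      _ = (∑ i ∈ range m, pc (m+n-1) 0 (ex μ) (pc n i (ex f) (ex g)) x)
          + ∑ i ∈ range m, pc (m+n-1) 1 (ex μ) (pc n i (ex f) (ex g)) x :=
          congrArg₂ (· + ·)
            (pc_right_sum μ (by omega) (m+n-1) (range m) (fun i => pc n i (ex f) (ex g)) x)
            (pc_right_sum μ (by omega) (m+n-1) (range m) (fun i => pc n i (ex f) (ex g)) x)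
      _ = _ := by
          refine congrArg₂ (· + ·) ?_ ?_
          · refine Finset.sum_congr rfl fun i hi => ?_
            have h := pc_nested μ (show (0:ℕ) < 2 by omega) (Finset.mem_range.mp hi)
              (ex f) (ex g) n x
            rw [show 0 + i = i by omega] at h
            exact h.symm
          · refine Finset.sum_congr rfl fun i hi => ?_
            have h := pc_nested μ (show (1:ℕ) < 2 by omega) (Finset.mem_range.mp hi)
              (ex f) (ex g) n x
            rw [show 1 + i = i + 1 by omega] at h
            exact h.symm
  have hA' : delta μ (m+n-1) (tc m n (ex f) (ex g)) x
      = -((sgn ((n:ℤ)-1) • (∑ i ∈ range m, ∑ k ∈ range i,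
              pc n (i+1) (pc 2 k (ex f) (ex μ)) (ex g) x)
            + (∑ i ∈ range m, ∑ t ∈ range n, pc (n+1) i (ex f) (pc 2 t (ex g) (ex μ)) x)
            + sgn ((n:ℤ)-1) • ∑ i ∈ range m, ∑ s ∈ range (m-1-i),
                pc n i (pc 2 (i+s+1) (ex f) (ex μ)) (ex g) x)
          - sgn ((((m + n - 1 : ℕ) : ℤ) - 1) * (((2:ℕ) : ℤ) - 1)) •
              ((∑ i ∈ range m, pc n i (pc m 0 (ex μ) (ex f)) (ex g) x)
                + ∑ i ∈ range m, pc n (i+1) (pc m 1 (ex μ) (ex f)) (ex g) x)) := by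
    have e : delta μ (m+n-1) (tc m n (ex f) (ex g)) x
        = -(tc (m+n-1) 2 (tc m n (ex f) (ex g)) (ex μ) x
            - sgn ((((m + n - 1 : ℕ) : ℤ) - 1) * (((2:ℕ) : ℤ) - 1)) •
              tc 2 (m+n-1) (ex μ) (tc m n (ex f) (ex g)) x) := rfl
    rw [e, hTA, hTB]
  have hC' : tc m (n+1) (ex f) (delta μ n (ex g)) x
      = -((∑ i ∈ range m, ∑ t ∈ range n, pc (n+1) i (ex f) (pc 2 t (ex g) (ex μ)) x)
          - sgn ((n:ℤ)-1) • ((∑ i ∈ range m, pc (n+1) i (ex f) (pc n 0 (ex μ) (ex g)) x)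
              + ∑ i ∈ range m, pc (n+1) i (ex f) (pc n 1 (ex μ) (ex g)) x)) := by
    calc tc m (n+1) (ex f) (delta μ n (ex g)) x
        = ∑ i ∈ range m, pc (n+1) i (ex f) (delta μ n (ex g)) x := rfl
      _ = ∑ i ∈ range m, (-((∑ t ∈ range n, pc (n+1) i (ex f) (pc 2 t (ex g) (ex μ)) x)
            - sgn ((n:ℤ)-1) • (pc (n+1) i (ex f) (pc n 0 (ex μ) (ex g)) x
                + pc (n+1) i (ex f) (pc n 1 (ex μ) (ex g)) x))) := by
          refine Finset.sum_congr rfl fun i hi => ?_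
          have hi' := Finset.mem_range.mp hi
          calc pc (n+1) i (ex f) (delta μ n (ex g)) x
              = -(pc (n+1) i (ex f) (tc n 2 (ex g) (ex μ)) x
                  - sgn (((n:ℤ)-1) * (((2:ℕ):ℤ)-1)) •
                    pc (n+1) i (ex f) (tc 2 n (ex μ) (ex g)) x) :=
                pc_right_shape f hi' (n+1) (sgn (((n:ℤ)-1) * (((2:ℕ):ℤ)-1)))
                  (tc n 2 (ex g) (ex μ)) (tc 2 n (ex μ) (ex g)) x
            _ = -((∑ t ∈ range n, pc (n+1) i (ex f) (pc 2 t (ex g) (ex μ)) x)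
                  - sgn (((n:ℤ)-1) * (((2:ℕ):ℤ)-1)) •
                    ∑ j ∈ range 2, pc (n+1) i (ex f) (pc n j (ex μ) (ex g)) x) :=
                congrArg Neg.neg (congrArg₂ Sub.sub
                  (pc_right_sum f hi' (n+1) (range n) (fun t => pc 2 t (ex g) (ex μ)) x)
                  (congrArg (sgn (((n:ℤ)-1) * (((2:ℕ):ℤ)-1)) • ·)
                    (pc_right_sum f hi' (n+1) (range 2) (fun j => pc n j (ex μ) (ex g)) x)))
            _ = _ := by
                rw [Finset.sum_range_succ, Finset.sum_range_succ, Finset.range_zero,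
                  Finset.sum_empty, zero_add,
                  show sgn (((n:ℤ)-1) * (((2:ℕ):ℤ)-1)) = sgn ((n:ℤ)-1) from
                    congrArg sgn (by push_cast; ring)]
      _ = _ := by
          rw [Finset.sum_neg_distrib, Finset.sum_sub_distrib, ← Finset.smul_sum,
            Finset.sum_add_distrib]
  have hD' : tc (m+1) n (delta μ m (ex f)) (ex g) x
      = -((∑ i ∈ range (m+1), ∑ k ∈ range m, pc n i (pc 2 k (ex f) (ex μ)) (ex g) x)
          - sgn ((m:ℤ)-1) • ((∑ i ∈ range (m+1), pc n i (pc m 0 (ex μ) (ex f)) (ex g) x)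
              + ∑ i ∈ range (m+1), pc n i (pc m 1 (ex μ) (ex f)) (ex g) x)) := by
    calc tc (m+1) n (delta μ m (ex f)) (ex g) x
        = ∑ i ∈ range (m+1), pc n i (delta μ m (ex f)) (ex g) x := rfl
      _ = ∑ i ∈ range (m+1), (-((∑ k ∈ range m, pc n i (pc 2 k (ex f) (ex μ)) (ex g) x)
            - sgn ((m:ℤ)-1) • (pc n i (pc m 0 (ex μ) (ex f)) (ex g) x
                + pc n i (pc m 1 (ex μ) (ex f)) (ex g) x))) := by
          refine Finset.sum_congr rfl fun i _ => ?_
          calc pc n i (delta μ m (ex f)) (ex g) x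
              = -(pc n i (tc m 2 (ex f) (ex μ)) (ex g) x
                  - sgn (((m:ℤ)-1) * (((2:ℕ):ℤ)-1)) •
                    pc n i (tc 2 m (ex μ) (ex f)) (ex g) x) :=
                pc_left_shape n i (sgn (((m:ℤ)-1) * (((2:ℕ):ℤ)-1)))
                  (tc m 2 (ex f) (ex μ)) (tc 2 m (ex μ) (ex f)) (ex g) x
            _ = -((∑ k ∈ range m, pc n i (pc 2 k (ex f) (ex μ)) (ex g) x)
                  - sgn (((m:ℤ)-1) * (((2:ℕ):ℤ)-1)) •
                    ∑ j ∈ range 2, pc n i (pc m j (ex μ) (ex f)) (ex g) x) :=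
                congrArg Neg.neg (congrArg₂ Sub.sub
                  (pc_left_sum n i (range m) (fun k => pc 2 k (ex f) (ex μ)) (ex g) x)
                  (congrArg (sgn (((m:ℤ)-1) * (((2:ℕ):ℤ)-1)) • ·)
                    (pc_left_sum n i (range 2) (fun j => pc m j (ex μ) (ex f)) (ex g) x)))
            _ = _ := by
                rw [Finset.sum_range_succ, Finset.sum_range_succ, Finset.range_zero,
                  Finset.sum_empty, zero_add,
                  show sgn (((m:ℤ)-1) * (((2:ℕ):ℤ)-1)) = sgn ((m:ℤ)-1) from
                    congrArg sgn (by push_cast; ring)]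
      _ = _ := by
          rw [Finset.sum_neg_distrib, Finset.sum_sub_distrib, ← Finset.smul_sum,
            Finset.sum_add_distrib]
  have hpair : (∑ i ∈ range (m+1), ∑ k ∈ range m, pc n i (pc 2 k (ex f) (ex μ)) (ex g) x)
      = (∑ i ∈ range m, ∑ k ∈ range i, pc n (i+1) (pc 2 k (ex f) (ex μ)) (ex g) x)
        + (∑ i ∈ range m, ∑ s ∈ range (m-1-i), pc n i (pc 2 (i+s+1) (ex f) (ex μ)) (ex g) x)
        + (∑ i ∈ range m, pc n i (pc 2 i (ex f) (ex μ)) (ex g) x)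
        + ∑ i ∈ range m, pc n (i+1) (pc 2 i (ex f) (ex μ)) (ex g) x :=
    pair_split m (fun i k => pc n i (pc 2 k (ex f) (ex μ)) (ex g) x)
  have hQ0 : (∑ i ∈ range m, pc n i (pc 2 i (ex f) (ex μ)) (ex g) x)
      = ∑ i ∈ range m, pc (n+1) i (ex f) (pc n 0 (ex μ) (ex g)) x := by
    refine Finset.sum_congr rfl fun i hi => ?_
    have h := pc_nested f (Finset.mem_range.mp hi) (show (0:ℕ) < 2 by omega) (ex μ) (ex g) n x
    rw [show i + 0 = i from rfl, show 2 + n - 1 = n + 1 by omega] at h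
    exact h
  have hQ1 : (∑ i ∈ range m, pc n (i+1) (pc 2 i (ex f) (ex μ)) (ex g) x)
      = ∑ i ∈ range m, pc (n+1) i (ex f) (pc n 1 (ex μ) (ex g)) x := by
    refine Finset.sum_congr rfl fun i hi => ?_
    have h := pc_nested f (Finset.mem_range.mp hi) (show (1:ℕ) < 2 by omega) (ex μ) (ex g) n x
    rw [show 2 + n - 1 = n + 1 by omega] at h
    exact h
  have hSB0 : (∑ i ∈ range (m+1), pc n i (pc m 0 (ex μ) (ex f)) (ex g) x)
      = (∑ i ∈ range m, pc n i (pc m 0 (ex μ) (ex f)) (ex g) x)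
        + pc n m (pc m 0 (ex μ) (ex f)) (ex g) x :=
    Finset.sum_range_succ _ m
  have hSB1 : (∑ i ∈ range (m+1), pc n i (pc m 1 (ex μ) (ex f)) (ex g) x)
      = (∑ i ∈ range m, pc n (i+1) (pc m 1 (ex μ) (ex f)) (ex g) x)
        + pc n 0 (pc m 1 (ex μ) (ex f)) (ex g) x :=
    Finset.sum_range_succ' _ m
  have hV : pc m n (pc n 0 (ex μ) (ex g)) (ex f) x
      = sgn (((n:ℤ)-1) * ((m:ℤ)-1)) • pc n 0 (pc m 1 (ex μ) (ex f)) (ex g) x := by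
    have h := pc_disjoint g (ex μ) (ex f) m 0 0 x
    rw [show 0 + n + 0 = n by omega, show 0 + 0 + 1 = 1 from rfl] at h
    exact h
  have hceq : sgn ((((m + n - 1 : ℕ) : ℤ) - 1) * (((2:ℕ) : ℤ) - 1)) •
        ((∑ i ∈ range m, pc n i (pc m 0 (ex μ) (ex f)) (ex g) x)
          + ∑ i ∈ range m, pc n (i+1) (pc m 1 (ex μ) (ex f)) (ex g) x)
      = (sgn ((n:ℤ)-1) * sgn ((m:ℤ)-1)) •
        ((∑ i ∈ range m, pc n i (pc m 0 (ex μ) (ex f)) (ex g) x)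
          + ∑ i ∈ range m, pc n (i+1) (pc m 1 (ex μ) (ex f)) (ex g) x) := by
    rcases Nat.eq_zero_or_pos m with hm | hm
    · subst hm
      simp
    · have hs : sgn ((((m + n - 1 : ℕ) : ℤ) - 1) * (((2:ℕ) : ℤ) - 1))
          = sgn ((n:ℤ)-1) * sgn ((m:ℤ)-1) := by
        rw [show ((((m + n - 1 : ℕ) : ℤ)) - 1) * (((2:ℕ):ℤ) - 1)
            = (((m + n - 1 : ℕ) : ℤ)) - 1 by push_cast; ring]
        rw [show (((m + n - 1 : ℕ) : ℤ)) - 1 = ((n:ℤ)-1) + ((m:ℤ)-1) by omega]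
        rw [sgn_add]
      rw [hs]
  have k1 : sgn ((m:ℤ)-1) = -sgn ((m:ℤ)) := by
    rw [show (m:ℤ)-1 = (m:ℤ) + (-1) by ring, sgn_add, sgn_neg_one, mul_neg_one]
  have k2 : sgn ((m:ℤ)*(n:ℤ)) * sgn ((n:ℤ)) * sgn (((n:ℤ)-1)*((m:ℤ)-1)) = sgn ((m:ℤ)-1) := by
    rw [← sgn_add, ← sgn_add,
      show (m:ℤ)*(n:ℤ) + (n:ℤ) + ((n:ℤ)-1)*((m:ℤ)-1)
        = ((m:ℤ)-1) + 2*((m:ℤ)*(n:ℤ) - (m:ℤ) + 1) by ring,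
      sgn_add, sgn_two_mul, mul_one]
  have k1n : sgn (-1 + (m:ℤ)) = -sgn ((m:ℤ)) := by
    rw [sgn_add, sgn_neg_one, neg_one_mul]
  have k2n : sgn ((n:ℤ)*(m:ℤ)) * sgn ((n:ℤ)) * sgn (1 - (n:ℤ) + ((n:ℤ)*(m:ℤ) - (m:ℤ)))
      = sgn (-1 + (m:ℤ)) := by
    rw [← sgn_add, ← sgn_add,
      show (n:ℤ)*(m:ℤ) + (n:ℤ) + (1 - (n:ℤ) + ((n:ℤ)*(m:ℤ) - (m:ℤ)))
        = (-1 + (m:ℤ)) + 2*((n:ℤ)*(m:ℤ) - (m:ℤ) + 1) by ring,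
      sgn_add, sgn_two_mul, mul_one]
  rw [hA', hC', hD', hpair, hQ0, hQ1, hSB0, hSB1, hceq,
    show cup μ m n (ex f) (ex g) x
      = sgn ((m:ℕ):ℤ) • pc n m (pc m 0 (ex μ) (ex f)) (ex g) x from rfl,
    show cup μ n m (ex g) (ex f) x
      = sgn ((n:ℕ):ℤ) • pc m n (pc n 0 (ex μ) (ex g)) (ex f) x from rfl,
    hV]
  match_scalars <;>
    first
      | linear_combination (sgn ((n:ℤ)-1)) * k1
      | linear_combination (-(sgn ((n:ℤ)-1))) * k1
      | linear_combination (sgn ((n:ℤ)-1)) * k2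
      | linear_combination (-(sgn ((n:ℤ)-1))) * k2
      | linear_combination (sgn (-1+(n:ℤ))) * k2n
      | linear_combination (-(sgn (-1+(n:ℤ)))) * k1n
      | ring1

end OperadPrelude
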